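/- For fixed r with 0 < r < 2R, the scaled intersection volume α₂(r;R) is a strictly decreasing function of the dimension d. -/

import Mathlib

open Real

/-- The scaled intersection volume of two `d`-dimensional balls of radius `R` at center
distance `r`, given by `α₂(r;R) = c(d) ∫₀^{arccos(r/(2R))} sin^d θ dθ` with
`c(d) = 2Γ(1+d/2)/(√π Γ((d+1)/2))`. -/
noncomputable def scaledIntersectionVol (d : ℕ) (r R : ℝ) : ℝ :=
  (2 * Real.Gamma (1 + d / 2) / (Real.sqrt π * Real.Gamma ((d + 1) / 2))) *
    ∫ θ in (0 : ℝ)..Real.arccos (r / (2 * R)), Real.sin θ ^ d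

private lemma sinPowII (d : ℕ) (a b : ℝ) :
    IntervalIntegrable (fun θ => Real.sin θ ^ d) MeasureTheory.volume a b :=
  (Real.continuous_sin.pow d).intervalIntegrable a b

private lemma sinPowIntPos (d : ℕ) {a b : ℝ} (h0 : 0 ≤ a) (hab : a < b) (hb : b ≤ π) :
    0 < ∫ θ in a..b, Real.sin θ ^ d := by
  refine intervalIntegral.intervalIntegral_pos_of_pos_on (sinPowII d a b) ?_ hab
  intro x hx
  exact pow_pos (Real.sin_pos_of_pos_of_lt_pi (lt_of_le_of_lt h0 hx.1)
    (lt_of_lt_of_le hx.2 hb)) d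

/-- Key ratio inequality. -/
private lemma key_ineq {a : ℝ} (ha0 : 0 < a) (ha2 : a < π / 2) (d : ℕ) :
    (∫ θ in (0:ℝ)..a, Real.sin θ ^ (d + 1)) * (∫ θ in (0:ℝ)..(π/2), Real.sin θ ^ d)
      < (∫ θ in (0:ℝ)..a, Real.sin θ ^ d) * (∫ θ in (0:ℝ)..(π/2), Real.sin θ ^ (d + 1)) := by
  have hπ : (0:ℝ) < π / 2 := by positivity
  have hsm : StrictMonoOn Real.sin (Set.Icc (-(π/2)) (π/2)) := Real.strictMonoOn_sin
  have hmem : ∀ x : ℝ, 0 ≤ x → x ≤ π / 2 → x ∈ Set.Icc (-(π/2)) (π/2) := fun x hx1 hx2 =>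
    ⟨le_trans (by linarith) hx1, hx2⟩
  have hJd : (∫ θ in (0:ℝ)..(π/2), Real.sin θ ^ d)
      = (∫ θ in (0:ℝ)..a, Real.sin θ ^ d) + ∫ θ in a..(π/2), Real.sin θ ^ d :=
    (intervalIntegral.integral_add_adjacent_intervals (sinPowII d 0 a) (sinPowII d a _)).symm
  have hJd1 : (∫ θ in (0:ℝ)..(π/2), Real.sin θ ^ (d+1))
      = (∫ θ in (0:ℝ)..a, Real.sin θ ^ (d+1)) + ∫ θ in a..(π/2), Real.sin θ ^ (d+1) :=
    (intervalIntegral.integral_add_adjacent_intervals (sinPowII (d+1) 0 a)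
      (sinPowII (d+1) a _)).symm
  set I := ∫ θ in (0:ℝ)..a, Real.sin θ ^ d with hI
  set I' := ∫ θ in (0:ℝ)..a, Real.sin θ ^ (d+1) with hI'
  set M := ∫ θ in a..(π/2), Real.sin θ ^ d with hM
  set M' := ∫ θ in a..(π/2), Real.sin θ ^ (d+1) with hM'
  have hIpos : 0 < I := sinPowIntPos d le_rfl ha0 (by linarith [Real.pi_pos])
  have hMpos : 0 < M := sinPowIntPos d ha0.le ha2 (by linarith [Real.pi_pos])
  -- I' ≤ sin a * I
  have h1 : I' ≤ Real.sin a * I := by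
    rw [hI', hI, ← intervalIntegral.integral_const_mul]
    refine intervalIntegral.integral_mono_on ha0.le (sinPowII (d+1) 0 a)
      ((continuous_const.mul (Real.continuous_sin.pow d)).intervalIntegrable 0 a) ?_
    intro x hx
    have hxm := hmem x hx.1 (le_trans hx.2 ha2.le)
    have ham := hmem a ha0.le ha2.le
    have hsle : Real.sin x ≤ Real.sin a := hsm.monotoneOn hxm ham hx.2
    calc Real.sin x ^ (d+1) = Real.sin x * Real.sin x ^ d := by ring
      _ ≤ Real.sin a * Real.sin x ^ d :=
        mul_le_mul_of_nonneg_right hsle (pow_nonneg (Real.sin_nonneg_of_nonneg_of_le_pi hx.1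
          (by linarith [Real.pi_pos, hx.2])) d)
  -- sin a * M < M'
  have h2 : Real.sin a * M < M' := by
    rw [hM, hM', ← intervalIntegral.integral_const_mul]
    refine intervalIntegral.integral_lt_integral_of_continuousOn_of_le_of_exists_lt ha2
      ((continuous_const.mul (Real.continuous_sin.pow d)).continuousOn)
      ((Real.continuous_sin.pow (d+1)).continuousOn) ?_ ?_
    · intro x hx
      have hxm := hmem x (le_trans ha0.le hx.1.le) hx.2
      have ham := hmem a ha0.le ha2.le
      have hsle : Real.sin a ≤ Real.sin x := (hsm.monotoneOn ham hxm hx.1.le)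
      calc Real.sin a * Real.sin x ^ d ≤ Real.sin x * Real.sin x ^ d :=
            mul_le_mul_of_nonneg_right hsle (pow_nonneg (Real.sin_nonneg_of_nonneg_of_le_pi
              (le_trans ha0.le hx.1.le) (by linarith [Real.pi_pos, hx.2])) d)
        _ = Real.sin x ^ (d+1) := by ring
    · refine ⟨(a + π/2)/2, ⟨by linarith, by linarith⟩, ?_⟩
      have hc1 : a < (a + π/2)/2 := by linarith
      have hc2 : (a + π/2)/2 < π/2 := by linarith
      have hslt : Real.sin a < Real.sin ((a + π/2)/2) :=
        hsm (hmem a ha0.le ha2.le) (hmem _ (by linarith) hc2.le) hc1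
      have hsp : 0 < Real.sin ((a + π/2)/2) :=
        Real.sin_pos_of_pos_of_lt_pi (by linarith) (by linarith [Real.pi_pos])
      calc Real.sin a * Real.sin ((a + π/2)/2) ^ d
            < Real.sin ((a + π/2)/2) * Real.sin ((a + π/2)/2) ^ d :=
            mul_lt_mul_of_pos_right hslt (pow_pos hsp d)
        _ = Real.sin ((a + π/2)/2) ^ (d+1) := by ring
  rw [hJd, hJd1]
  nlinarith [mul_le_mul_of_nonneg_right h1 hMpos.le, mul_lt_mul_of_pos_left h2 hIpos]

/-- Normalization: `c(d) * ∫₀^{π/2} sin^d = 1`. -/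
private lemma norm_eq_one (d : ℕ) :
    (2 * Real.Gamma (1 + (d:ℝ) / 2) / (Real.sqrt π * Real.Gamma (((d:ℝ) + 1) / 2))) *
      (∫ θ in (0:ℝ)..(π/2), Real.sin θ ^ d) = 1 := by
  induction d using Nat.twoStepInduction with
  | zero =>
    simp only [Nat.cast_zero, zero_div, add_zero, zero_add, pow_zero]
    rw [Real.Gamma_one, Real.Gamma_one_half_eq, intervalIntegral.integral_const]
    have h : Real.sqrt π * Real.sqrt π = π := Real.mul_self_sqrt Real.pi_pos.le
    have hs : (0:ℝ) < Real.sqrt π := Real.sqrt_pos.2 Real.pi_pos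
    field_simp
    rw [smul_eq_mul, Real.sq_sqrt Real.pi_pos.le]; ring
  | one =>
    have h32 : Real.Gamma (1 + (1:ℝ)/2) = (1/2) * Real.sqrt π := by
      have h := Real.Gamma_add_one (s := (1:ℝ)/2) (by norm_num)
      rw [show (1:ℝ) + 1/2 = 1/2 + 1 by ring, h, Real.Gamma_one_half_eq]
    simp only [Nat.cast_one, pow_one, integral_sin, Real.cos_pi_div_two, Real.cos_zero]
    rw [h32, show ((1:ℝ) + 1) / 2 = 1 by ring, Real.Gamma_one]
    have hs : (0:ℝ) < Real.sqrt π := Real.sqrt_pos.2 Real.pi_pos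
    field_simp
    norm_num
  | more d ih _ =>
    have hrec := integral_sin_pow (a := 0) (b := π/2) d
    rw [Real.sin_zero, Real.cos_pi_div_two] at hrec
    have hΓ1 : Real.Gamma (1 + ((d:ℝ)+2) / 2) = (1 + (d:ℝ)/2) * Real.Gamma (1 + (d:ℝ)/2) := by
      have := Real.Gamma_add_one (s := 1 + (d:ℝ)/2) (by positivity)
      rw [show (1:ℝ) + ((d:ℝ)+2)/2 = (1 + (d:ℝ)/2) + 1 by ring, this]
    have hΓ2 : Real.Gamma ((((d:ℝ)+2) + 1) / 2) = (((d:ℝ)+1)/2) * Real.Gamma (((d:ℝ)+1)/2) := by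
      have := Real.Gamma_add_one (s := ((d:ℝ)+1)/2) (by positivity)
      rw [show (((d:ℝ)+2) + 1)/2 = (((d:ℝ)+1)/2) + 1 by ring, this]
    push_cast
    rw [hΓ1, hΓ2, hrec]
    have hΓ1p : 0 < Real.Gamma (1 + (d:ℝ)/2) := Real.Gamma_pos_of_pos (by positivity)
    have hΓ2p : 0 < Real.Gamma (((d:ℝ)+1)/2) := Real.Gamma_pos_of_pos (by positivity)
    have hs : (0:ℝ) < Real.sqrt π := Real.sqrt_pos.2 Real.pi_pos
    have hd1 : (0:ℝ) < (d:ℝ) + 1 := by positivity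
    have hd2 : (0:ℝ) < (d:ℝ) + 2 := by positivity
    have hJ : (∫ θ in (0:ℝ)..(π/2), Real.sin θ ^ d)
        = (Real.sqrt π * Real.Gamma (((d:ℝ)+1)/2)) / (2 * Real.Gamma (1 + (d:ℝ)/2)) := by
      field_simp at ih ⊢
      linarith [ih]
    rw [hJ]
    field_simp
    ring

/-- For fixed `0 < r < 2R`, the scaled intersection volume `α₂(r;R)` is a strictly
decreasing function of the dimension `d ≥ 1`. -/
theorem scaledIntersectionVol_strict_anti_in_dim
    (R r : ℝ) (hr0 : 0 < r) (hr2 : r < 2 * R) :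
    ∀ d₁ d₂ : ℕ, 1 ≤ d₁ → d₁ < d₂ →
      scaledIntersectionVol d₂ r R < scaledIntersectionVol d₁ r R := by
  have hR : 0 < R := by linarith
  set x := r / (2 * R) with hx
  have hx0 : 0 < x := div_pos hr0 (by linarith)
  have hx1 : x < 1 := (div_lt_one (by linarith)).2 hr2
  set a := Real.arccos x with ha
  have ha0 : 0 < a := Real.arccos_pos.2 hx1
  have ha2 : a < π / 2 := Real.arccos_lt_pi_div_two.2 hx0
  have hstep : ∀ d : ℕ, scaledIntersectionVol (d+1) r R < scaledIntersectionVol d r R := by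
    intro d
    unfold scaledIntersectionVol
    have hJd : 0 < ∫ θ in (0:ℝ)..(π/2), Real.sin θ ^ d :=
      sinPowIntPos d le_rfl (by positivity) (by linarith [Real.pi_pos])
    have hJd1 : 0 < ∫ θ in (0:ℝ)..(π/2), Real.sin θ ^ (d+1) :=
      sinPowIntPos (d+1) le_rfl (by positivity) (by linarith [Real.pi_pos])
    have hc : (2 * Real.Gamma (1 + (d:ℝ) / 2) / (Real.sqrt π * Real.Gamma (((d:ℝ) + 1) / 2)))
        = (∫ θ in (0:ℝ)..(π/2), Real.sin θ ^ d)⁻¹ :=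
      eq_inv_of_mul_eq_one_left (norm_eq_one d)
    have hc1 : (2 * Real.Gamma (1 + ((d:ℝ)+1) / 2) / (Real.sqrt π * Real.Gamma ((((d:ℝ)+1) + 1) / 2)))
        = (∫ θ in (0:ℝ)..(π/2), Real.sin θ ^ (d+1))⁻¹ := by
      have h := norm_eq_one (d+1); push_cast at h
      exact eq_inv_of_mul_eq_one_left h
    push_cast
    rw [hc, hc1, inv_mul_eq_div, inv_mul_eq_div, div_lt_div_iff₀ hJd1 hJd]
    exact key_ineq ha0 ha2 d
  intro d₁ d₂ _ hlt
  exact strictAnti_nat_of_succ_lt (f := fun d => scaledIntersectionVol d r R) hstep hlt
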